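/- arXiv:1201.0557 — 2 statements merged into one kernel-verified Lean document; each statement's English description precedes it below -/
import Mathlib

section
/- Let R be a subuniverse of the product algebra A × B, and define for X ⊆ A the neighborhood X⁺ = {b ∈ B : ∃ a ∈ X, (a,b) ∈ R}. If X is a subuniverse of A then X⁺ is a subuniverse of B. Moreover, if R is subdirect in A × B and X is an absorbing subuniverse of A, then X⁺ is an absorbing subuniverse of B (with respect to the same term). -/
structure Signature : Type 1 where
  symbols : Type
  arity : symbols → ℕ

structure UAlgebra (σ : Signature) : Type 1 where
  carrier : Type
  op : ∀ s : σ.symbols, (Fin (σ.arity s) → carrier) → carrier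

inductive Term (σ : Signature) (n : ℕ) : Type
  | var : Fin n → Term σ n
  | app (s : σ.symbols) : (Fin (σ.arity s) → Term σ n) → Term σ n

def Term.eval {σ : Signature} (A : UAlgebra σ) {n : ℕ} :
    Term σ n → (Fin n → A.carrier) → A.carrier
  | .var i, x => x i
  | .app s ts, x => A.op s fun j => Term.eval A (ts j) x

/-- `B` is a subuniverse of the algebra `A`. -/
def Subuniverse {σ : Signature} (A : UAlgebra σ) (B : Set A.carrier) : Prop :=
  ∀ (s : σ.symbols) (a : Fin (σ.arity s) → A.carrier), (∀ i, a i ∈ B) → A.op s a ∈ B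

/-- `B` absorbs `A` with respect to the term `t`. -/
def AbsorbsWith {σ : Signature} (A : UAlgebra σ) (B : Set A.carrier) {n : ℕ} (t : Term σ n) : Prop :=
  ∀ (k : Fin n) (a : Fin n → A.carrier), (∀ i, i ≠ k → a i ∈ B) → t.eval A a ∈ B

/-- `C` absorbs the subalgebra with universe `B` (inside the ambient algebra `A`)
with respect to the term `t`. -/
def AbsorbsWithIn {σ : Signature} (A : UAlgebra σ) (B C : Set A.carrier) {n : ℕ}
    (t : Term σ n) : Prop :=
  ∀ (k : Fin n) (a : Fin n → A.carrier), (∀ i, a i ∈ B) → (∀ i, i ≠ k → a i ∈ C) →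
    t.eval A a ∈ C

/-- `B` is an absorbing subalgebra (subuniverse) of `A`. -/
def Absorbing {σ : Signature} (A : UAlgebra σ) (B : Set A.carrier) : Prop :=
  Subuniverse A B ∧ ∃ (n : ℕ) (t : Term σ n), AbsorbsWith A B t

/-- `B` is a proper absorbing subalgebra of `A`: `∅ ≠ B ≠ A`. -/
def ProperAbsorbing {σ : Signature} (A : UAlgebra σ) (B : Set A.carrier) : Prop :=
  Absorbing A B ∧ B.Nonempty ∧ B ≠ Set.univ

/-- `C` is a minimal absorbing subalgebra of `A`. -/
def MinAbsorbing {σ : Signature} (A : UAlgebra σ) (C : Set A.carrier) : Prop :=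
  Absorbing A C ∧ C.Nonempty ∧ ∀ C' ⊆ C, Absorbing A C' → C'.Nonempty → C' = C

/-- All (basic, equivalently term) operations of `A` are idempotent. -/
def Idempotent {σ : Signature} (A : UAlgebra σ) : Prop :=
  ∀ (s : σ.symbols) (a : A.carrier), A.op s (fun _ => a) = a

/-- `t` is a Taylor term of the algebra `A`. -/
def IsTaylorTerm {σ : Signature} (A : UAlgebra σ) {k : ℕ} (t : Term σ k) : Prop :=
  (∀ a : A.carrier, t.eval A (fun _ => a) = a) ∧
  ∀ j : Fin k, ∃ u v : Fin k → Fin 2, u j = 0 ∧ v j = 1 ∧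
    ∀ x : Fin 2 → A.carrier, t.eval A (fun i => x (u i)) = t.eval A (fun i => x (v i))

/-- The product of two algebras of the same signature. -/
def UAlgebra.prod {σ : Signature} (A B : UAlgebra σ) : UAlgebra σ where
  carrier := A.carrier × B.carrier
  op s x := (A.op s fun i => (x i).1, B.op s fun i => (x i).2)

/-- The `k`-th power of an algebra. -/
def UAlgebra.pow {σ : Signature} (A : UAlgebra σ) (k : ℕ) : UAlgebra σ where
  carrier := Fin k → A.carrier
  op s x := fun j => A.op s fun i => x i j

/-- `R ⊆ A × B` is subdirect: both projections are onto. -/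
def Subdirect2 {α β : Type} (R : Set (α × β)) : Prop :=
  (∀ a, ∃ b, (a, b) ∈ R) ∧ ∀ b, ∃ a, (a, b) ∈ R

/-- `a` and `a'` are linked in `R` (connected in the bipartite graph of `R`). -/
def LinkedPair {α β : Type} (R : Set (α × β)) (a a' : α) : Prop :=
  Relation.ReflTransGen (fun x y => ∃ b, (x, b) ∈ R ∧ (y, b) ∈ R) a a'

/-- `R` is linked: any two elements of the projection of `R` to the first
coordinate are `R`-linked. -/
def IsLinked {α β : Type} (R : Set (α × β)) : Prop :=
  ∀ a a', (∃ b, (a, b) ∈ R) → (∃ b, (a', b) ∈ R) → LinkedPair R a a'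

/-- Cyclic shift of a `k`-tuple. -/
def cycShift {α : Type} {k : ℕ} (x : Fin k → α) : Fin k → α := fun i =>
  x ⟨(i.val + 1) % k, Nat.mod_lt _ (Nat.lt_of_le_of_lt (Nat.zero_le _) i.isLt)⟩

/-- `t` is a cyclic term of `A`: idempotent and invariant under cyclic shift. -/
def IsCyclicTerm {σ : Signature} (A : UAlgebra σ) {k : ℕ} (t : Term σ k) : Prop :=
  (∀ a : A.carrier, t.eval A (fun _ => a) = a) ∧
  ∀ x : Fin k → A.carrier, t.eval A x = t.eval A (cycShift x)


lemma Subuniverse.eval_mem {σ : Signature} {A : UAlgebra σ} {X : Set A.carrier}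
    (hX : Subuniverse A X) {n : ℕ} (t : Term σ n) (a : Fin n → A.carrier)
    (ha : ∀ i, a i ∈ X) : t.eval A a ∈ X := by
  induction t with
  | var i => exact ha i
  | app s ts ih => exact hX s _ fun j => ih j

lemma eval_prod {σ : Signature} (A B : UAlgebra σ) {n : ℕ} (t : Term σ n)
    (x : Fin n → (A.prod B).carrier) :
    t.eval (A.prod B) x = (t.eval A fun i => (x i).1, t.eval B fun i => (x i).2) := by
  induction t with
  | var i => rfl
  | app s ts ih =>
      show (A.prod B).op s _ = _
      simp only [UAlgebra.prod, Term.eval]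
      congr 1
      · congr 1; funext j; exact congrArg Prod.fst (ih j)
      · congr 1; funext j; exact congrArg Prod.snd (ih j)

/-- Neighbourhoods preserve subuniverses and absorbing
subuniverses: if `R ≤ A × B` and `X ≤ A` then `X⁺ ≤ B`; moreover, if `R` is
subdirect and `X` absorbs `A` with respect to `t`, then `X⁺` absorbs `B` with
respect to the same term `t`. -/
theorem neighbourhood_subuniverse {σ : Signature} (A B : UAlgebra σ)
    (R : Set (A.carrier × B.carrier)) (hR : Subuniverse (A.prod B) R)
    (X : Set A.carrier) :
    (Subuniverse A X → Subuniverse B {b | ∃ a ∈ X, (a, b) ∈ R}) ∧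
    (Subdirect2 R → ∀ {n : ℕ} (t : Term σ n), AbsorbsWith A X t →
      AbsorbsWith B {b | ∃ a ∈ X, (a, b) ∈ R} t) := by
  constructor
  · intro hX s b hb
    choose a haX haR using hb
    refine ⟨A.op s a, hX s a haX, ?_⟩
    have := hR s (fun i => (a i, b i)) (fun i => haR i)
    exact this
  · intro hsub n t hX k b hb
    have : ∀ i, ∃ a, (i ≠ k → a ∈ X) ∧ (a, b i) ∈ R := by
      intro i
      by_cases h : i = k
      · obtain ⟨a, haR⟩ := hsub.2 (b i)
        exact ⟨a, fun h' => absurd h h', haR⟩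
      · obtain ⟨a, haX, haR⟩ := hb i h
        exact ⟨a, fun _ => haX, haR⟩
    choose a haX haR using this
    refine ⟨t.eval A a, hX k a haX, ?_⟩
    have := Subuniverse.eval_mem hR t (fun i => (a i, b i)) haR
    exact (congrArg (· ∈ R) (eval_prod A B t (fun i => (a i, b i)))).mp this
end

section
/- For every finite idempotent algebra A there exists a single term operation s of A such that for every subset B ⊆ A and every element b of the subalgebra generated by B, there exist elements a_0,...,a_{arity(s)-1} ∈ B with s(a_0,...,a_{arity(s)-1}) = b. -/
/-- The subuniverse of `A` generated by `B`. -/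
def Generated {σ : Signature} (A : UAlgebra σ) (B : Set A.carrier) : Set A.carrier :=
  ⋂₀ {S | Subuniverse A S ∧ B ⊆ S}


section Aux

variable {σ : Signature}

/-- Substitution of terms into a term. -/
def Term.subst {p q : ℕ} : Term σ p → (Fin p → Term σ q) → Term σ q
  | .var i, g => g i
  | .app s ts, g => .app s (fun j => (ts j).subst g)

lemma Term.eval_subst (A : UAlgebra σ) {p q : ℕ} (t : Term σ p) (g : Fin p → Term σ q)
    (a : Fin q → A.carrier) :
    (t.subst g).eval A a = t.eval A (fun i => (g i).eval A a) := by
  induction t with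
  | var i => rfl
  | app s ts ih =>
      simp only [Term.subst, Term.eval]
      congr 1
      funext j
      exact ih j

lemma Term.eval_idem (A : UAlgebra σ) (hA : Idempotent A) {p : ℕ} (t : Term σ p)
    (x : A.carrier) : t.eval A (fun _ => x) = x := by
  induction t with
  | var i => rfl
  | app s ts ih =>
      simp only [Term.eval]
      have : (fun j => (ts j).eval A (fun _ => x)) = fun _ => x := funext fun j => ih j
      rw [this]
      exact hA s x

/-- A single term simulating every term in a finite list. -/
lemma sim_term (A : UAlgebra σ) (hA : Idempotent A) (m : ℕ) (L : List (Term σ m)) :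
    ∃ (n : ℕ) (s : Term σ n), ∀ t ∈ L, ∃ f : Fin n → Fin m,
      ∀ a : Fin m → A.carrier, s.eval A (a ∘ f) = t.eval A a := by
  induction L with
  | nil => exact ⟨1, Term.var 0, fun t ht => absurd ht List.not_mem_nil⟩
  | cons t L ih =>
      obtain ⟨n', s', hs'⟩ := ih
      refine ⟨m * n',
        t.subst (fun i => s'.subst (fun j => Term.var (finProdFinEquiv (i, j)))), ?_⟩
      intro u hu
      have heval : ∀ a : Fin (m * n') → A.carrier,
          (t.subst (fun i => s'.subst (fun j => Term.var (finProdFinEquiv (i, j))))).eval A a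
            = t.eval A (fun i => s'.eval A (fun j => a (finProdFinEquiv (i, j)))) := by
        intro a
        rw [Term.eval_subst]
        congr 1
        funext i
        rw [Term.eval_subst]
        rfl
      rcases List.mem_cons.mp hu with h | h
      · subst h
        refine ⟨fun k => (finProdFinEquiv.symm k).1, ?_⟩
        intro a
        rw [heval]
        have : ∀ i : Fin m, s'.eval A
            (fun j => (a ∘ fun k => (finProdFinEquiv.symm k).1) (finProdFinEquiv (i, j))) = a i := by
          intro i
          have h2 : (fun j : Fin n' =>
              (a ∘ fun k => (finProdFinEquiv.symm k).1) (finProdFinEquiv (i, j)))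
              = fun _ => a i := by
            funext j
            simp [Function.comp]
          rw [h2]
          exact Term.eval_idem A hA s' (a i)
        simp only [this]
      · obtain ⟨f', hf'⟩ := hs' u h
        refine ⟨fun k => f' (finProdFinEquiv.symm k).2, ?_⟩
        intro a
        rw [heval]
        have : ∀ i : Fin m, s'.eval A
            (fun j => (a ∘ fun k => f' (finProdFinEquiv.symm k).2) (finProdFinEquiv (i, j)))
            = u.eval A a := by
          intro i
          have h2 : (fun j : Fin n' =>
              (a ∘ fun k => f' (finProdFinEquiv.symm k).2) (finProdFinEquiv (i, j)))
              = a ∘ f' := by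
            funext j
            simp [Function.comp]
          rw [h2]
          exact hf' a
        simp only [this]
        exact Term.eval_idem A hA t (u.eval A a)

end Aux

/-- For every finite idempotent algebra `A` there is a single term
`s` such that every element of the subalgebra generated by any subset `B ⊆ A` is
obtained by applying `s` to elements of `B`. -/
theorem generating_term {σ : Signature} (A : UAlgebra σ) [Fintype A.carrier]
    (hA : Idempotent A) :
    ∃ (n : ℕ) (s : Term σ n), ∀ (B : Set A.carrier) (b : A.carrier),
      b ∈ Generated A B →
        ∃ a : Fin n → A.carrier, (∀ i, a i ∈ B) ∧ s.eval A a = b := by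
  classical
  by_cases hn : ∃ s0 : σ.symbols, σ.arity s0 = 0
  · -- there is a nullary symbol: the carrier is a subsingleton
    obtain ⟨s0, hs0⟩ := hn
    have hsub : ∀ x y : A.carrier, x = y := by
      intro x y
      have hx := hA s0 x
      have hy := hA s0 y
      have : (fun _ : Fin (σ.arity s0) => x) = (fun _ => y) := by
        funext i
        exact absurd i.2 (by omega)
      rw [this] at hx
      rw [hy] at hx
      exact hx.symm
    refine ⟨0, Term.app s0 (fun i => Fin.elim0 (Fin.cast hs0 i)), ?_⟩
    intro B b _
    exact ⟨Fin.elim0, fun i => Fin.elim0 i, hsub _ b⟩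
  · push_neg at hn
    by_cases hempty : IsEmpty A.carrier
    · exact ⟨1, Term.var 0, fun B b _ => hempty.elim b⟩
    have hne : Nonempty A.carrier := not_isEmpty_iff.mp hempty
    set m := Fintype.card A.carrier with hm
    have hmpos : 0 < m := Fintype.card_pos
    -- key: every element of a generated subuniverse is the value of a term of arity m on B
    have key : ∀ (B : Set A.carrier) (b : A.carrier), ∃ t : Term σ m,
        b ∈ Generated A B → ∃ e : Fin m → A.carrier,
          (∀ i, e i ∈ B) ∧ t.eval A e = b := by
      intro B b
      by_cases hb : b ∈ Generated A B
      · by_cases hBne : B.Nonempty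
        · obtain ⟨b0, hb0⟩ := hBne
          let eq := (Fintype.equivFin A.carrier)
          let e : Fin m → A.carrier := fun i => if eq.symm i ∈ B then eq.symm i else b0
          have he : ∀ i, e i ∈ B := by
            intro i
            by_cases h : eq.symm i ∈ B
            · simp [e, h]
            · simp [e, h, hb0]
          set T : Set A.carrier := {y | ∃ t : Term σ m, t.eval A e = y} with hT
          have hTsub : Subuniverse A T := by
            intro s a ha
            choose ts hts using ha
            exact ⟨Term.app s ts, by simp only [Term.eval]; congr 1; funext j; exact hts j⟩
          have hBT : B ⊆ T := by
            intro x hx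
            refine ⟨Term.var (eq x), ?_⟩
            have : e (eq x) = x := by
              simp [e, eq.symm_apply_apply, hx]
            simpa [Term.eval] using this
          have hbT : b ∈ T := hb T ⟨hTsub, hBT⟩
          obtain ⟨t, ht⟩ := hbT
          exact ⟨t, fun _ => ⟨e, he, ht⟩⟩
        · -- B empty: contradiction since ∅ is a subuniverse (no nullary symbols)
          have hBe : B = ∅ := Set.not_nonempty_iff_eq_empty.mp hBne
          have hsubemp : Subuniverse A (∅ : Set A.carrier) := by
            intro s a ha
            have i : Fin (σ.arity s) := ⟨0, Nat.pos_of_ne_zero (hn s)⟩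
            exact absurd (ha i) (Set.notMem_empty _)
          have : b ∈ (∅ : Set A.carrier) := hb ∅ ⟨hsubemp, by rw [hBe]⟩
          exact absurd this (Set.notMem_empty b)
      · exact ⟨Term.var ⟨0, hmpos⟩, fun h => absurd h hb⟩
    have : Fintype (Set A.carrier) := Fintype.ofFinite _
    set L : List (Term σ m) :=
      (Finset.univ : Finset (Set A.carrier × A.carrier)).toList.map
        (fun p => (key p.1 p.2).choose) with hL
    obtain ⟨n, s, hsim⟩ := sim_term A hA m L
    refine ⟨n, s, ?_⟩
    intro B b hb
    have hmem : (key B b).choose ∈ L := by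
      rw [hL]
      exact List.mem_map.mpr ⟨(B, b), Finset.mem_toList.mpr (Finset.mem_univ _), rfl⟩
    obtain ⟨f, hf⟩ := hsim _ hmem
    obtain ⟨e, he, hev⟩ := (key B b).choose_spec hb
    exact ⟨e ∘ f, fun i => he (f i), by rw [hf e]; exact hev⟩
end
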